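/- Let N ≥ 2 and let D^N be the (N-1)×(N-1) tridiagonal matrix with -2 on the diagonal and 1 on the sub- and superdiagonals. If v ∈ ℝ^{N-1} satisfies v_n ∈ [a,b] for all n, with a ≤ 0 ≤ b, then every component of exp(t N² D^N) v lies in [a,b] for every t ≥ 0. -/

import Mathlib

open Matrix NormedSpace

namespace HeatAux

variable {m : ℕ}

/-- Entrywise bound on matrix powers. -/
lemma pow_entry_abs_le (M : Matrix (Fin m) (Fin m) ℝ) (C : ℝ)
    (hC : ∀ i j, |M i j| ≤ C) (k : ℕ) (i j : Fin m) :
    |(M ^ k) i j| ≤ ((m : ℝ) * C) ^ k := by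
  induction k generalizing i j with
  | zero =>
    simp only [pow_zero, Matrix.one_apply]
    split <;> simp
  | succ k ih =>
    have hC0 : 0 ≤ C := le_trans (abs_nonneg _) (hC i j)
    rw [pow_succ, Matrix.mul_apply]
    calc |∑ l, (M ^ k) i l * M l j| ≤ ∑ l, |(M ^ k) i l * M l j| :=
          Finset.abs_sum_le_sum_abs _ _
      _ ≤ ∑ _l : Fin m, ((m : ℝ) * C) ^ k * C := by
          refine Finset.sum_le_sum fun l _ => ?_
          rw [abs_mul]
          exact mul_le_mul (ih i l) (hC l j) (abs_nonneg _)
            (pow_nonneg (by positivity) _)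
      _ = ((m : ℝ) * C) ^ (k + 1) := by
          rw [Finset.sum_const, Finset.card_univ, Fintype.card_fin]
          push_cast [pow_succ]
          ring

lemma summable_entry (M : Matrix (Fin m) (Fin m) ℝ) (i j : Fin m) :
    Summable fun k : ℕ => (k.factorial : ℝ)⁻¹ * (M ^ k) i j := by
  set C : ℝ := ∑ p, ∑ q, |M p q| with hCdef
  have hC : ∀ p q, |M p q| ≤ C := by
    intro p q
    calc |M p q| ≤ ∑ q', |M p q'| := by
          refine Finset.single_le_sum (f := fun q' => |M p q'|)
            (fun _ _ => abs_nonneg _) (Finset.mem_univ q)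
      _ ≤ C := by
          refine Finset.single_le_sum (f := fun p' => ∑ q', |M p' q'|)
            (fun p' _ => Finset.sum_nonneg fun _ _ => abs_nonneg _) (Finset.mem_univ p)
  refine Summable.of_norm_bounded
    (Real.summable_pow_div_factorial ((m : ℝ) * C)) fun k => ?_
  have hk : (0:ℝ) ≤ (k.factorial : ℝ)⁻¹ := by positivity
  rw [Real.norm_eq_abs, abs_mul, abs_inv, Nat.abs_cast, div_eq_inv_mul]
  exact mul_le_mul_of_nonneg_left (pow_entry_abs_le M C hC k i j) hk

lemma exp_entry (M : Matrix (Fin m) (Fin m) ℝ) (i j : Fin m) :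
    exp M i j = ∑' k : ℕ, (k.factorial : ℝ)⁻¹ * (M ^ k) i j := by
  have hsum : Summable fun k : ℕ => (k.factorial : ℝ)⁻¹ • M ^ k := by
    refine Pi.summable.mpr ?_
    intro p
    refine Pi.summable.mpr ?_
    intro q
    simpa using summable_entry M p q
  have hsum' : Summable fun k : ℕ => ((k.factorial : ℝ)⁻¹ • M ^ k) i := by
    refine Pi.summable.mpr ?_; intro q; simpa using summable_entry M i q
  simp only [exp_eq_tsum ℝ]
  refine (congrFun (tsum_apply hsum (x := i)) j).trans ((tsum_apply hsum' (x := j)).trans ?_)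
  rfl

lemma pow_entry_nonneg (B : Matrix (Fin m) (Fin m) ℝ) (hB : ∀ i j, 0 ≤ B i j)
    (k : ℕ) (i j : Fin m) : 0 ≤ (B ^ k) i j := by
  induction k generalizing i j with
  | zero =>
    simp only [pow_zero, Matrix.one_apply]
    split <;> norm_num
  | succ k ih =>
    rw [pow_succ, Matrix.mul_apply]
    exact Finset.sum_nonneg fun l _ => mul_nonneg (ih i l) (hB l j)

lemma exp_entry_nonneg (B : Matrix (Fin m) (Fin m) ℝ) (hB : ∀ i j, 0 ≤ B i j)
    (i j : Fin m) : 0 ≤ exp B i j := by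
  rw [exp_entry]
  exact tsum_nonneg fun k => mul_nonneg (by positivity) (pow_entry_nonneg B hB k i j)

lemma pow_row_sum_le (B : Matrix (Fin m) (Fin m) ℝ) (hB : ∀ i j, 0 ≤ B i j)
    (r : ℝ) (hr : 0 ≤ r) (hrow : ∀ i, ∑ j, B i j ≤ r) (k : ℕ) (i : Fin m) :
    ∑ j, (B ^ k) i j ≤ r ^ k := by
  induction k generalizing i with
  | zero => simp [Matrix.one_apply]
  | succ k ih =>
    have hrw : ∀ j, (B ^ (k + 1)) i j = ∑ l, B i l * (B ^ k) l j := by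
      intro j; rw [pow_succ', Matrix.mul_apply]
    simp_rw [hrw]
    rw [Finset.sum_comm]
    calc ∑ l, ∑ j, B i l * (B ^ k) l j = ∑ l, B i l * ∑ j, (B ^ k) l j := by
          simp_rw [Finset.mul_sum]
      _ ≤ ∑ l, B i l * r ^ k := Finset.sum_le_sum fun l _ =>
          mul_le_mul_of_nonneg_left (ih l) (hB i l)
      _ = (∑ l, B i l) * r ^ k := by rw [Finset.sum_mul]
      _ ≤ r * r ^ k := mul_le_mul_of_nonneg_right (hrow i) (pow_nonneg hr k)
      _ = r ^ (k + 1) := by rw [pow_succ']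

lemma exp_row_sum_le (B : Matrix (Fin m) (Fin m) ℝ) (hB : ∀ i j, 0 ≤ B i j)
    (r : ℝ) (hr : 0 ≤ r) (hrow : ∀ i, ∑ j, B i j ≤ r) (i : Fin m) :
    ∑ j, exp B i j ≤ Real.exp r := by
  have h1 : ∑ j, exp B i j
      = ∑' k : ℕ, ∑ j, (k.factorial : ℝ)⁻¹ * (B ^ k) i j := by
    simp_rw [exp_entry]
    exact (Summable.tsum_finsetSum fun j _ => summable_entry B i j).symm
  rw [h1]
  have hRsummable : Summable fun k : ℕ => (k.factorial : ℝ)⁻¹ * r ^ k := by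
    simpa [div_eq_inv_mul] using Real.summable_pow_div_factorial r
  have hLsummable : Summable fun k : ℕ => ∑ j, (k.factorial : ℝ)⁻¹ * (B ^ k) i j :=
    summable_sum fun j _ => summable_entry B i j
  have hle : (∑' k : ℕ, ∑ j, (k.factorial : ℝ)⁻¹ * (B ^ k) i j) ≤
      ∑' k : ℕ, (k.factorial : ℝ)⁻¹ * r ^ k := by
    refine Summable.tsum_le_tsum (fun k => ?_) hLsummable hRsummable
    rw [← Finset.mul_sum]
    exact mul_le_mul_of_nonneg_left (pow_row_sum_le B hB r hr hrow k i) (by positivity)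
  have hexp : Real.exp r = ∑' k : ℕ, (k.factorial : ℝ)⁻¹ * r ^ k := by
    rw [Real.exp_eq_exp_ℝ]
    simp only [exp_eq_tsum ℝ, smul_eq_mul]
  rw [hexp]
  exact hle

end HeatAux

/-- The discrete heat semigroup `exp(t N² Dᴺ)` preserves the interval `[a,b]`
componentwise, where `Dᴺ` is the finite-difference Dirichlet Laplacian matrix. -/
theorem matrix_exp_heat_preserves_Icc (N : ℕ) (hN : 2 ≤ N) (a b : ℝ)
    (ha : a ≤ 0) (hb : 0 ≤ b)
    (D : Matrix (Fin (N - 1)) (Fin (N - 1)) ℝ)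
    (hD : ∀ i j : Fin (N - 1), D i j =
      if i = j then -2
      else if (i : ℤ) - (j : ℤ) = 1 ∨ (j : ℤ) - (i : ℤ) = 1 then 1 else 0)
    (v : Fin (N - 1) → ℝ) (hv : ∀ n, v n ∈ Set.Icc a b)
    (t : ℝ) (ht : 0 ≤ t) :
    ∀ n, (NormedSpace.exp ((t * (N : ℝ) ^ 2) • D)).mulVec v n ∈ Set.Icc a b := by
  set s : ℝ := t * (N : ℝ) ^ 2 with hs
  have hs0 : 0 ≤ s := by positivity
  -- the nonnegative part B = s • (D + 2 • 1)
  set B : Matrix (Fin (N - 1)) (Fin (N - 1)) ℝ := s • (D + (2 : ℝ) • 1) with hBdef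
  have hBapp : ∀ i j, B i j = s * (D i j + 2 * (if i = j then (1:ℝ) else 0)) := by
    intro i j
    simp only [hBdef, Matrix.smul_apply, Matrix.add_apply, Matrix.smul_apply,
      Matrix.one_apply, smul_eq_mul]
  have hB : ∀ i j, 0 ≤ B i j := by
    intro i j
    rw [hBapp]
    refine mul_nonneg hs0 ?_
    rw [hD]
    rcases eq_or_ne i j with hij | hij
    · norm_num [hij]
    · simp only [hij, if_false, if_neg hij, mul_zero, add_zero]
      split <;> norm_num
  have hBrow : ∀ i, ∑ j, B i j ≤ 2 * s := by
    intro i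
    have key : ∀ j : Fin (N - 1), B i j ≤ s * ((if (j : ℤ) = (i : ℤ) + 1 then 1 else 0)
        + (if (j : ℤ) = (i : ℤ) - 1 then 1 else 0)) := by
      intro j
      rw [hBapp]
      refine mul_le_mul_of_nonneg_left ?_ hs0
      rw [hD]
      rcases eq_or_ne i j with hij | hij
      · simp only [if_pos hij]
        have h1 : (0:ℝ) ≤ (if (j:ℤ) = (i:ℤ) + 1 then (1:ℝ) else 0) := by split <;> norm_num
        have h2 : (0:ℝ) ≤ (if (j:ℤ) = (i:ℤ) - 1 then (1:ℝ) else 0) := by split <;> norm_num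
        linarith
      · simp only [hij, if_false, if_neg hij, mul_zero, add_zero]
        split
        · rename_i hcond
          rcases hcond with h1 | h1
          · have hj : (j : ℤ) = (i : ℤ) - 1 := by omega
            rw [if_pos hj]
            split <;> norm_num
          · have hj : (j : ℤ) = (i : ℤ) + 1 := by omega
            rw [if_pos hj]
            split <;> norm_num
        · positivity
    calc ∑ j, B i j
        ≤ ∑ j : Fin (N - 1), s * ((if (j : ℤ) = (i : ℤ) + 1 then 1 else 0)
          + (if (j : ℤ) = (i : ℤ) - 1 then 1 else 0)) := Finset.sum_le_sum fun j _ => key j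
      _ = s * ((∑ j : Fin (N - 1), if (j : ℤ) = (i : ℤ) + 1 then (1:ℝ) else 0)
          + ∑ j : Fin (N - 1), if (j : ℤ) = (i : ℤ) - 1 then (1:ℝ) else 0) := by
          rw [← Finset.mul_sum, Finset.sum_add_distrib]
      _ ≤ 2 * s := by
          have haux : ∀ c : ℤ,
              (∑ j : Fin (N - 1), if (j : ℤ) = c then (1:ℝ) else 0) ≤ 1 := by
            intro c
            rw [Finset.sum_boole]
            have hcard : (Finset.univ.filter fun j : Fin (N - 1) => (j : ℤ) = c).card ≤ 1 := by
              refine Finset.card_le_one.mpr fun x hx y hy => ?_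
              simp only [Finset.mem_filter] at hx hy
              have hxy : (x : ℤ) = (y : ℤ) := by rw [hx.2, hy.2]
              exact Fin.ext (by exact_mod_cast hxy)
            exact_mod_cast hcard
          have h1 := haux ((i : ℤ) + 1)
          have h2 := haux ((i : ℤ) - 1)
          have hnn : ∀ c : ℤ,
              (0:ℝ) ≤ ∑ j : Fin (N - 1), if (j : ℤ) = c then (1:ℝ) else 0 :=
            fun c => Finset.sum_nonneg fun j _ => by split <;> norm_num
          nlinarith [hnn ((i : ℤ) + 1), hnn ((i : ℤ) - 1)]
  -- decompose s • D
  have hdecomp : s • D = (-(2 * s)) • (1 : Matrix (Fin (N-1)) (Fin (N-1)) ℝ) + B := by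
    ext i j
    simp only [hBdef, Matrix.add_apply, Matrix.smul_apply, Matrix.one_apply, smul_eq_mul]
    rcases eq_or_ne i j with hij | hij <;> simp [hij] <;> ring
  have hcomm : Commute ((-(2 * s)) • (1 : Matrix (Fin (N-1)) (Fin (N-1)) ℝ)) B :=
    (Commute.one_left B).smul_left _
  have hexp1 : NormedSpace.exp ((-(2 * s)) • (1 : Matrix (Fin (N-1)) (Fin (N-1)) ℝ))
      = Real.exp (-(2 * s)) • (1 : Matrix (Fin (N-1)) (Fin (N-1)) ℝ) := by
    rw [Matrix.smul_one_eq_diagonal, Matrix.exp_diagonal, Matrix.smul_one_eq_diagonal]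
    have hfun : (exp fun _ : Fin (N - 1) => -(2 * s))
        = fun _ : Fin (N - 1) => Real.exp (-(2 * s)) := by
      funext x
      rw [Pi.coe_exp, Real.exp_eq_exp_ℝ]
    rw [hfun]
  have hexpM : NormedSpace.exp (s • D)
      = Real.exp (-(2 * s)) • NormedSpace.exp B := by
    rw [hdecomp, Matrix.exp_add_of_commute _ _ hcomm, hexp1, smul_mul_assoc, one_mul]
  -- properties of P = exp (s • D)
  set P := NormedSpace.exp (s • D) with hP
  have hPnonneg : ∀ i j, 0 ≤ P i j := by
    intro i j
    rw [hexpM]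
    simp only [Matrix.smul_apply, smul_eq_mul]
    exact mul_nonneg (Real.exp_nonneg _) (HeatAux.exp_entry_nonneg B hB i j)
  have hProw : ∀ i, ∑ j, P i j ≤ 1 := by
    intro i
    rw [hexpM]
    simp only [Matrix.smul_apply, smul_eq_mul]
    rw [← Finset.mul_sum]
    calc Real.exp (-(2 * s)) * ∑ j, NormedSpace.exp B i j
        ≤ Real.exp (-(2 * s)) * Real.exp (2 * s) :=
          mul_le_mul_of_nonneg_left
            (HeatAux.exp_row_sum_le B hB (2 * s) (by positivity) hBrow i)
            (Real.exp_nonneg _)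
      _ = 1 := by rw [← Real.exp_add]; norm_num
  intro n
  have hmv : P.mulVec v n = ∑ j, P n j * v j := rfl
  constructor
  · have h1 : (∑ j, P n j) * a ≤ ∑ j, P n j * v j := by
      rw [Finset.sum_mul]
      exact Finset.sum_le_sum fun j _ =>
        mul_le_mul_of_nonneg_left (hv j).1 (hPnonneg n j)
    have h2 : a ≤ (∑ j, P n j) * a := by
      have := mul_le_mul_of_nonpos_right (hProw n) ha
      linarith
    rw [hmv]
    linarith
  · have h1 : ∑ j, P n j * v j ≤ (∑ j, P n j) * b := by
      rw [Finset.sum_mul]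
      exact Finset.sum_le_sum fun j _ =>
        mul_le_mul_of_nonneg_left (hv j).2 (hPnonneg n j)
    have h2 : (∑ j, P n j) * b ≤ b := mul_le_of_le_one_left hb (hProw n)
    rw [hmv]
    linarith
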